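/- For all integers k ≥ 1 and n ≥ 1, the unique zero ρ_k of Q_k(z) = 1 − 2z + z^k(1−z) in the closed unit disk satisfies exp(−n/2^k) < (2ρ_k)^{-n} < exp(−n/2^{k+2}). -/

import Mathlib

private lemma two_mul_le_two_pow (k : ℕ) (hk : 1 ≤ k) : 2 * k ≤ 2 ^ k := by
  induction k with
  | zero => omega
  | succ m ih =>
    rcases Nat.lt_or_ge m 1 with h | h
    · interval_cases m <;> norm_num
    · have h1 := ih h
      have h2 : 2 ≤ 2 ^ m := Nat.one_lt_two_pow_iff.mpr (by omega)
      have h3 : 2 ^ (m + 1) = 2 ^ m + 2 ^ m := by ring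
      omega

/-- `k t^(k-1) (1-t) ≤ 1 - t^k` for `t ∈ [0,1]`. -/
private lemma deriv_key_bound (k : ℕ) (hk : 1 ≤ k) {t : ℝ} (h0 : 0 ≤ t) (h1 : t ≤ 1) :
    (k : ℝ) * t ^ (k - 1) * (1 - t) ≤ 1 - t ^ k := by
  have hsum : (k : ℝ) * t ^ (k - 1) ≤ ∑ i ∈ Finset.range k, t ^ i := by
    have hpt : ∀ i ∈ Finset.range k, t ^ (k - 1) ≤ t ^ i := by
      intro i hi
      exact pow_le_pow_of_le_one h0 h1 (by have := Finset.mem_range.mp hi; omega)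
    calc (k : ℝ) * t ^ (k - 1) = ∑ _i ∈ Finset.range k, t ^ (k - 1) := by
          simp [Finset.sum_const, mul_comm]
      _ ≤ ∑ i ∈ Finset.range k, t ^ i := Finset.sum_le_sum hpt
  have hgeom : (1 - t) * ∑ i ∈ Finset.range k, t ^ i = 1 - t ^ k := by
    have := geom_sum_mul t k
    nlinarith [this]
  calc (k : ℝ) * t ^ (k - 1) * (1 - t) ≤ (∑ i ∈ Finset.range k, t ^ i) * (1 - t) :=
        mul_le_mul_of_nonneg_right hsum (by linarith)
    _ = 1 - t ^ k := by rw [mul_comm]; exact hgeom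

/-- `g(t) = t^k (1-t) - (2t - 1)` is strictly antitone on `[1/2, 1]`. -/
private lemma g_strictAnti (k : ℕ) (hk : 1 ≤ k) :
    StrictAntiOn (fun t : ℝ => t ^ k * (1 - t) - (2 * t - 1)) (Set.Icc (1/2 : ℝ) 1) := by
  apply strictAntiOn_of_deriv_neg (convex_Icc _ _)
  · exact (Continuous.continuousOn (by continuity))
  · intro t ht
    rw [interior_Icc] at ht
    have h0 : (0:ℝ) ≤ t := by linarith [ht.1]
    have h1 : t ≤ 1 := le_of_lt ht.2
    have hd : HasDerivAt (fun t : ℝ => t ^ k * (1 - t) - (2 * t - 1))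
        ((k : ℝ) * t ^ (k - 1) * (1 - t) + t ^ k * (0 - 1) - (2 * 1 - 0)) t :=
      ((hasDerivAt_pow k t).mul ((hasDerivAt_const t 1).sub
          (hasDerivAt_id' t))).sub
        ((HasDerivAt.const_mul 2 (hasDerivAt_id' t)).sub
          (hasDerivAt_const t 1))
    rw [hd.deriv]
    have hkey := deriv_key_bound k hk h0 h1
    have hpk : (0:ℝ) ≤ t ^ k := pow_nonneg h0 k
    nlinarith

/-- **Lemma 2 (exponential bounds).** For all `k ≥ 1` and `n ≥ 1`, the unique zero `ρ k` of
`Q_k(z) = 1 − 2z + z^k(1−z)` in the closed unit disk satisfies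
`exp(−n/2^k) < (2ρ_k)^{-n} < exp(−n/2^{k+2})`. -/
theorem rho_power_bounds
    (ρ : ℕ → ℝ)
    (hρ_mem : ∀ k, 1 ≤ k → 1 / 2 < ρ k ∧ ρ k < 1)
    (hρ_root : ∀ k, 1 ≤ k → 1 - 2 * ρ k + (ρ k) ^ k * (1 - ρ k) = 0)
    (hρ_unique : ∀ k, 1 ≤ k → ∀ z : ℂ, ‖z‖ ≤ 1 →
      1 - 2 * z + z ^ k * (1 - z) = 0 → z = (ρ k : ℂ)) :
    ∀ k : ℕ, 1 ≤ k → ∀ n : ℕ, 1 ≤ n →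
      Real.exp (-(n : ℝ) / 2 ^ k) < 1 / (2 * ρ k) ^ n ∧
      1 / (2 * ρ k) ^ n < Real.exp (-(n : ℝ) / 2 ^ (k + 2)) := by
  intro k hk n hn
  obtain ⟨hr1, hr2⟩ := hρ_mem k hk
  have hroot := hρ_root k hk
  set r := ρ k with hr_def
  set x : ℝ := 2 * r - 1 with hx_def
  have hx_eq : x = r ^ k * (1 - r) := by rw [hx_def]; linarith
  have hr0 : (0:ℝ) < r := by linarith
  have hx_pos : 0 < x := by rw [hx_def]; linarith
  have hrk_lt1 : r ^ k < 1 := pow_lt_one₀ (le_of_lt hr0) hr2 (by omega)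
  -- x < 1/3
  have hx_third : x < 1/3 := by
    have h : x < 1 - r := by
      rw [hx_eq]
      nlinarith [hrk_lt1, hr2]
    linarith [hx_def]
  -- p = 2^k
  set p : ℝ := 2 ^ k with hp_def
  have hp2 : (2:ℝ) ≤ p := by
    rw [hp_def]
    calc (2:ℝ) = 2 ^ 1 := by norm_num
      _ ≤ 2 ^ k := pow_le_pow_right₀ (by norm_num) hk
  have hp_pos : (0:ℝ) < p := by linarith
  -- key estimate for the upper bound
  have hc_pow : ((1 + 1/p)/2) ^ k < 2 / p := by
    have h1 : ((1:ℝ) + 1/p) ^ k ≤ Real.exp (1/p) ^ k :=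
      pow_le_pow_left₀ (by positivity) (by linarith [Real.add_one_le_exp (1/p)]) k
    have h2 : Real.exp (1/p) ^ k = Real.exp ((k:ℝ) * (1/p)) := (Real.exp_nat_mul _ k).symm
    have hkp : (k : ℝ) * (1/p) ≤ 1/2 := by
      have h := two_mul_le_two_pow k hk
      have h' : (2:ℝ) * k ≤ p := by rw [hp_def]; exact_mod_cast h
      rw [mul_one_div, div_le_iff₀ hp_pos]; linarith
    have h3 : Real.exp ((k:ℝ) * (1/p)) ≤ Real.exp (1/2) := Real.exp_le_exp.mpr hkp
    have h4 : Real.exp (1/2 : ℝ) < 2 := by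
      have hl : (1/2 : ℝ) < Real.log 2 := by
        have := Real.log_two_gt_d9; linarith
      calc Real.exp (1/2 : ℝ) < Real.exp (Real.log 2) := Real.exp_lt_exp.mpr hl
        _ = 2 := Real.exp_log (by norm_num)
    have h5 : ((1:ℝ) + 1/p) ^ k < 2 := by
      calc ((1:ℝ) + 1/p) ^ k ≤ Real.exp ((k:ℝ) * (1/p)) := h2 ▸ h1
        _ ≤ Real.exp (1/2) := h3
        _ < 2 := h4
    have h6 : ((1 + 1/p)/2) ^ k = (1 + 1/p) ^ k / p := by
      rw [div_pow, ← hp_def]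
    rw [h6, div_lt_div_iff₀ hp_pos hp_pos]
    nlinarith [h5, hp_pos]
  -- upper bound: x < 1/p
  have hx_ub : x < 1/p := by
    by_contra hcon
    push_neg at hcon
    set c : ℝ := (1 + 1/p)/2 with hc_def
    have h1p_pos : (0:ℝ) < 1/p := by positivity
    have h1p_le : (1:ℝ)/p ≤ 1/2 := by
      rw [div_le_div_iff₀ hp_pos (by norm_num : (0:ℝ) < 2)]; linarith
    have hc_half : (1/2 : ℝ) < c := by rw [hc_def]; linarith
    have hc_le1 : c ≤ 1 := by rw [hc_def]; linarith
    have hrc : c ≤ r := by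
      have : 1/p ≤ 2*r - 1 := hx_def ▸ hcon
      rw [hc_def]; linarith
    have hg := g_strictAnti k hk
    have hc_pos : (0:ℝ) < c := by linarith
    have hck_pos : (0:ℝ) < c ^ k := pow_pos hc_pos k
    have h2c : 2 * c - 1 = 1/p := by rw [hc_def]; ring
    have h1c_lt : 1 - c < 1/2 := by rw [hc_def]; linarith
    have hgc_neg : c ^ k * (1 - c) - (2 * c - 1) < 0 := by
      have hchain : c ^ k * (1 - c) < 1/p := by
        calc c ^ k * (1 - c) < c ^ k * (1/2) := mul_lt_mul_of_pos_left h1c_lt hck_pos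
          _ < (2/p) * (1/2) := mul_lt_mul_of_pos_right hc_pow (by norm_num)
          _ = 1/p := by ring
      linarith [h2c ▸ hchain]
    have hgr_zero : r ^ k * (1 - r) - (2 * r - 1) = 0 := by linarith [hroot]
    rcases eq_or_lt_of_le hrc with heq | hlt
    · rw [← heq] at hgr_zero; linarith
    · have hgg := hg (Set.mem_Icc.mpr ⟨le_of_lt hc_half, hc_le1⟩)
        (Set.mem_Icc.mpr ⟨le_of_lt hr1, le_of_lt hr2⟩) hlt
      simp only at hgg
      linarith
  -- lower bound: 1 - x < 2 p x
  have hx_lb : 1 - x < 2 * p * x := by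
    have h2r1 : (1:ℝ) < 2 * r := by linarith
    have hpr : 1 < p * r ^ k := by
      have := one_lt_pow₀ h2r1 (by omega : k ≠ 0)
      calc (1:ℝ) < (2*r)^k := this
        _ = p * r ^ k := by rw [mul_pow, ← hp_def]
    have h1r_pos : (0:ℝ) < 1 - r := by linarith
    have hmul : 1 - r < (p * r ^ k) * (1 - r) := lt_mul_of_one_lt_left h1r_pos hpr
    have hpx : p * x = p * r ^ k * (1 - r) := by rw [hx_eq]; ring
    have h1r_eq : 1 - r = (1 - x)/2 := by rw [hx_def]; ring
    nlinarith [hmul, hpx, h1r_eq]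
  -- log bounds
  have h1x_pos : (0:ℝ) < 1 + x := by linarith
  have hlog_ub : Real.log (1 + x) < 1/p := by
    have := Real.log_lt_sub_one_of_pos h1x_pos (by linarith)
    linarith
  have hlog_lb : 1/(4*p) < Real.log (1 + x) := by
    have hexp : Real.exp (x/(1+x)) ≤ 1 + x := by
      have h := Real.add_one_le_exp (-(x/(1+x)))
      have h1 : -(x/(1+x)) + 1 = 1/(1+x) := by field_simp; ring
      rw [h1, Real.exp_neg, ← one_div] at h
      exact (one_div_le_one_div h1x_pos (Real.exp_pos _)).mp h
    have hlog : x/(1+x) ≤ Real.log (1+x) :=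
      (Real.le_log_iff_exp_le h1x_pos).mpr hexp
    have hstep : 1/(4*p) < x/(1+x) := by
      rw [div_lt_div_iff₀ (by positivity) h1x_pos]
      nlinarith [hx_lb, hx_third, hx_pos, hp2]
    linarith
  -- conclude
  have h2r : 2 * r = 1 + x := by rw [hx_def]; ring
  have hpow : (2 * r) ^ n = Real.exp ((n:ℝ) * Real.log (1 + x)) := by
    rw [Real.exp_nat_mul, Real.exp_log h1x_pos, h2r]
  have hinv : 1 / (2 * r) ^ n = Real.exp (-((n:ℝ) * Real.log (1 + x))) := by
    rw [hpow, Real.exp_neg]; simp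
  have hn_pos : (0:ℝ) < n := by exact_mod_cast hn
  constructor
  · rw [hinv]
    apply Real.exp_lt_exp.mpr
    rw [neg_div, neg_lt_neg_iff]
    calc (n:ℝ) * Real.log (1 + x) < (n:ℝ) * (1/p) :=
          mul_lt_mul_of_pos_left hlog_ub hn_pos
      _ = (n:ℝ) / 2 ^ k := by rw [← hp_def]; ring
  · rw [hinv]
    apply Real.exp_lt_exp.mpr
    rw [neg_div, neg_lt_neg_iff]
    calc (n:ℝ) / 2 ^ (k + 2) = (n:ℝ) * (1/(4*p)) := by
          rw [hp_def]; ring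
      _ < (n:ℝ) * Real.log (1 + x) := mul_lt_mul_of_pos_left hlog_lb hn_pos
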